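/- Let L₀ > 0 and I > 0 be real numbers and let J : ℝ → ℝ be three times differentiable on [0, L₀], with J'(0) = 0, c := J''(0) < 0, |J'''(x)| ≤ I for all x ∈ [0, L₀], and L₀ < −2c/I. Then J'(x) < 0 for every x ∈ (0, L₀], and for every real v with J(0) + (L₀²/6)·(3c + L₀·I) < v < J(0) there exists a unique x₀ ∈ (0, L₀) such that J(x₀) = v. -/

import Mathlib

open Set

/-- If `f 0 = f 0` and `f'` is nonneg on the interior, `f` is monotone on `[0,L]`. -/
lemma mono_aux {L : ℝ} (hL : 0 < L) {f f' : ℝ → ℝ}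
    (hd : ∀ x ∈ Set.Icc 0 L, HasDerivWithinAt f (f' x) (Set.Icc 0 L) x)
    (hpos : ∀ x ∈ Set.Ioo 0 L, 0 ≤ f' x) :
    ∀ x ∈ Set.Icc 0 L, f 0 ≤ f x := by
  have hc : ContinuousOn f (Set.Icc 0 L) := fun x hx => (hd x hx).continuousWithinAt
  have hmono : MonotoneOn f (Set.Icc 0 L) := by
    apply monotoneOn_of_hasDerivWithinAt_nonneg (f' := f') (convex_Icc 0 L) hc
    · intro x hx
      rw [interior_Icc] at hx ⊢
      exact (hd x (Set.Ioo_subset_Icc_self hx)).mono Set.Ioo_subset_Icc_self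
    · intro x hx
      rw [interior_Icc] at hx
      exact hpos x hx
  intro x hx
  exact hmono (Set.left_mem_Icc.2 hL.le) hx hx.1

/-- Calculus core of Lemma 4.3: if `J` is three times differentiable on `[0,L₀]`,
`J'(0) = 0`, `J''(0) < 0`, `|J'''| ≤ I` on `[0,L₀]` and `L₀ < −2J''(0)/I`, then
`J' < 0` on `(0,L₀]` and every value `v` with
`J(0) + (L₀²/6)(3J''(0) + L₀I) < v < J(0)` is attained exactly once in `(0,L₀)`. -/
theorem shock_position_lemma_neg
    (L₀ I : ℝ) (J J' J'' J''' : ℝ → ℝ) (hL₀ : 0 < L₀) (hI : 0 < I)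
    (hd1 : ∀ x ∈ Set.Icc 0 L₀, HasDerivWithinAt J (J' x) (Set.Icc 0 L₀) x)
    (hd2 : ∀ x ∈ Set.Icc 0 L₀, HasDerivWithinAt J' (J'' x) (Set.Icc 0 L₀) x)
    (hd3 : ∀ x ∈ Set.Icc 0 L₀, HasDerivWithinAt J'' (J''' x) (Set.Icc 0 L₀) x)
    (h0 : J' 0 = 0) (hc : J'' 0 < 0)
    (hIb : ∀ x ∈ Set.Icc 0 L₀, |J''' x| ≤ I)
    (hL : L₀ < -(2 * J'' 0) / I) :
    (∀ x ∈ Set.Ioc 0 L₀, J' x < 0) ∧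
      ∀ v : ℝ, J 0 + L₀ ^ 2 / 6 * (3 * J'' 0 + L₀ * I) < v → v < J 0 →
        ∃! x₀, x₀ ∈ Set.Ioo 0 L₀ ∧ J x₀ = v := by
  have h0mem : (0 : ℝ) ∈ Set.Icc 0 L₀ := Set.left_mem_Icc.2 hL₀.le
  have hILc : L₀ * I < -(2 * J'' 0) := (lt_div_iff₀ hI).1 hL
  -- Step A: J'' x ≤ J'' 0 + I x on [0, L₀]
  have hJ2 : ∀ x ∈ Set.Icc 0 L₀, J'' x ≤ J'' 0 + I * x := by
    intro x hx
    have hb := Convex.norm_image_sub_le_of_norm_hasDerivWithin_le hd3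
      (fun y hy => by rw [Real.norm_eq_abs]; exact hIb y hy) (convex_Icc 0 L₀) h0mem hx
    rw [Real.norm_eq_abs, Real.norm_eq_abs, sub_zero, abs_of_nonneg hx.1] at hb
    have := (abs_le.1 hb).2
    linarith
  -- Step B: J' x ≤ J''0 * x + I x² / 2
  have hJ1 : ∀ x ∈ Set.Icc 0 L₀, J' x ≤ J'' 0 * x + I * x ^ 2 / 2 := by
    have hd : ∀ x ∈ Set.Icc 0 L₀, HasDerivWithinAt
        (fun y => J'' 0 * y + I * y ^ 2 / 2 - J' y)
        (J'' 0 + I * x - J'' x) (Set.Icc 0 L₀) x := by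
      intro x hx
      have hp : HasDerivWithinAt (fun y : ℝ => J'' 0 * y + I * y ^ 2 / 2)
          (J'' 0 + I * x) (Set.Icc 0 L₀) x := by
        have := (((hasDerivAt_id x).const_mul (J'' 0)).add
          (((hasDerivAt_pow 2 x).const_mul I).div_const 2)).hasDerivWithinAt
          (s := Set.Icc 0 L₀)
        refine this.congr_deriv ?_
        push_cast
        ring
      exact hp.sub (hd2 x hx)
    have key := mono_aux hL₀ hd (fun x hx => by
      have := hJ2 x (Set.Ioo_subset_Icc_self hx); linarith)
    intro x hx
    have := key x hx
    simp only [mul_zero, zero_pow, ne_eq, OfNat.ofNat_ne_zero, not_false_eq_true,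
      zero_div, h0, sub_zero, add_zero] at this
    nlinarith [this]
  -- Step C: J' < 0 on (0, L₀]
  have hneg : ∀ x ∈ Set.Ioc 0 L₀, J' x < 0 := by
    intro x hx
    have h1 := hJ1 x ⟨hx.1.le, hx.2⟩
    have h2 : I * x ≤ I * L₀ := mul_le_mul_of_nonneg_left hx.2 hI.le
    nlinarith [hx.1]
  -- Step D: J L₀ ≤ J 0 + J''0 L₀²/2 + I L₀³/6
  have hJL : J L₀ ≤ J 0 + J'' 0 * L₀ ^ 2 / 2 + I * L₀ ^ 3 / 6 := by
    have hd : ∀ x ∈ Set.Icc 0 L₀, HasDerivWithinAt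
        (fun y => J'' 0 * y ^ 2 / 2 + I * y ^ 3 / 6 - J y)
        (J'' 0 * x + I * x ^ 2 / 2 - J' x) (Set.Icc 0 L₀) x := by
      intro x hx
      have hp : HasDerivWithinAt (fun y : ℝ => J'' 0 * y ^ 2 / 2 + I * y ^ 3 / 6)
          (J'' 0 * x + I * x ^ 2 / 2) (Set.Icc 0 L₀) x := by
        have := ((((hasDerivAt_pow 2 x).const_mul (J'' 0)).div_const 2).add
          (((hasDerivAt_pow 3 x).const_mul I).div_const 6)).hasDerivWithinAt
          (s := Set.Icc 0 L₀)
        refine this.congr_deriv ?_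
        push_cast
        ring
      exact hp.sub (hd1 x hx)
    have key := mono_aux hL₀ hd (fun x hx => by
      have := hJ1 x (Set.Ioo_subset_Icc_self hx); linarith)
    have := key L₀ (Set.right_mem_Icc.2 hL₀.le)
    simp only [mul_zero, zero_pow, ne_eq, OfNat.ofNat_ne_zero, not_false_eq_true] at this
    nlinarith [this]
  -- Step E: J strictly antitone on [0, L₀]
  have hcont : ContinuousOn J (Set.Icc 0 L₀) := fun x hx => (hd1 x hx).continuousWithinAt
  have hanti : StrictAntiOn J (Set.Icc 0 L₀) := by
    apply strictAntiOn_of_deriv_neg (convex_Icc 0 L₀) hcont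
    intro x hx
    rw [interior_Icc] at hx
    rw [((hd1 x (Set.Ioo_subset_Icc_self hx)).hasDerivAt
      (Icc_mem_nhds hx.1 hx.2)).deriv]
    exact hneg x ⟨hx.1, hx.2.le⟩
  refine ⟨hneg, ?_⟩
  intro v hv1 hv2
  have hJLv : J L₀ < v := by nlinarith
  obtain ⟨x₀, hx₀, hJx₀⟩ := intermediate_value_Icc' hL₀.le hcont ⟨hJLv.le, hv2.le⟩
  have hx0 : 0 < x₀ := hx₀.1.lt_of_ne (fun h => by rw [← h] at hJx₀; linarith)
  have hxL : x₀ < L₀ := hx₀.2.lt_of_ne (fun h => by rw [h] at hJx₀; linarith)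
  refine ⟨x₀, ⟨⟨hx0, hxL⟩, hJx₀⟩, ?_⟩
  rintro y ⟨hy, hJy⟩
  exact hanti.injOn ⟨hy.1.le, hy.2.le⟩ ⟨hx0.le, hxL.le⟩ (hJy.trans hJx₀.symm)
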